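/- For any lists p and y* over a type α with decidable equality, the minimum of D(p ++ s, y*) over all lists s : List α equals m(p, y*) = min over 0 ≤ j ≤ |y*| of D(p, y*_{<j}); i.e., the infimum over all completions of the prefix p equals the minimum edit distance between p and the prefixes of y*. -/

import Mathlib

namespace Levenshtein

/-- Costs for the Levenshtein distance (as in the Mathlib of December 2024). -/
structure Cost (α β δ : Type*) where
  delete : α → δ
  insert : β → δ
  substitute : α → β → δ

/-- Unit costs for deletion, insertion and substitution of distinct letters. -/
def defaultCost {α : Type*} [DecidableEq α] : Cost α α ℕ where
  delete _ := 1
  insert _ := 1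
  substitute a b := if a = b then 0 else 1

/-- One step of the dynamic program computing the suffix Levenshtein distances. -/
def impl {α β δ : Type*} [AddZeroClass δ] [Min δ] (C : Cost α β δ)
    (xs : List α) (y : β) (d : {r : List δ // 0 < r.length}) : {r : List δ // 0 < r.length} :=
  let ⟨ds, w⟩ := d
  xs.zip (ds.zip ds.tail) |>.foldr
    (init := ⟨[ds.getLast (List.ne_nil_of_length_pos w) + C.insert y], by simp⟩)
    (fun ⟨x, d₀, d₁⟩ ⟨r, w⟩ =>
      ⟨min (C.delete x + r[0]) (min (C.insert y + d₀) (C.substitute x y + d₁)) :: r, by simp⟩)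

end Levenshtein

/-- Levenshtein distances from each suffix of `xs` to `ys`. -/
def suffixLevenshtein {α β δ : Type*} [AddZeroClass δ] [Min δ] (C : Levenshtein.Cost α β δ)
    (xs : List α) (ys : List β) : {r : List δ // 0 < r.length} :=
  ys.foldr
    (Levenshtein.impl C xs)
    (xs.foldr (init := ⟨[0], by simp⟩) (fun a ⟨r, w⟩ => ⟨(C.delete a + r[0]) :: r, by simp⟩))

/-- The Levenshtein distance with costs `C` (as in the Mathlib of December 2024). -/
def levenshtein {α β δ : Type*} [AddZeroClass δ] [Min δ] (C : Levenshtein.Cost α β δ)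
    (xs : List α) (ys : List β) : δ :=
  let ⟨r, w⟩ := suffixLevenshtein C xs ys
  r[0]

/-- Unit-cost Levenshtein edit distance between two lists. -/
def editDist {α : Type*} [DecidableEq α] (u v : List α) : ℕ :=
  levenshtein Levenshtein.defaultCost u v

/-- `rowMin p y = min over 0 ≤ j ≤ |y|` of the edit distance between `p` and `y.take j`. -/
def rowMin {α : Type*} [DecidableEq α] (p y : List α) : ℕ :=
  (Finset.range (y.length + 1)).inf' (by simp) (fun j => editDist p (y.take j))

section LevAux
variable {α β δ : Type*} [AddZeroClass δ] [Min δ] {C : Levenshtein.Cost α β δ}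

theorem levenshtein_nil_nil : levenshtein C [] [] = 0 := by
  simp [levenshtein, suffixLevenshtein]

theorem impl_length' (xs : List α) (y : β) (d : {r : List δ // 0 < r.length})
    (w : d.1.length = xs.length + 1) :
    (Levenshtein.impl C xs y d).1.length = xs.length + 1 := by
  induction xs generalizing d with
  | nil => rfl
  | cons x xs ih =>
    dsimp [Levenshtein.impl]
    match d, w with
    | ⟨d₁ :: d₂ :: ds, _⟩, w =>
      dsimp
      congr 1
      exact ih ⟨d₂ :: ds, (by simp)⟩ (by simpa using w)

theorem suffixLevenshtein_length' (xs : List α) (ys : List β) :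
    (suffixLevenshtein C xs ys).1.length = xs.length + 1 := by
  induction ys with
  | nil =>
    dsimp [suffixLevenshtein]
    induction xs with
    | nil => rfl
    | cons _ xs ih => simp_all
  | cons y ys ih =>
    dsimp [suffixLevenshtein]
    rw [impl_length']
    exact ih

theorem suffixLevenshtein_nil'' (ys : List β) :
    (suffixLevenshtein C [] ys).1 = [levenshtein C [] ys] := by
  have h := suffixLevenshtein_length' (C := C) [] ys
  show _ = [(suffixLevenshtein C [] ys).1[0]'(suffixLevenshtein C [] ys).2]
  generalize suffixLevenshtein C [] ys = d at h ⊢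
  obtain ⟨r, w⟩ := d
  cases r with
  | nil => simp at w
  | cons a t =>
    cases t with
    | nil => rfl
    | cons b t => simp at h

theorem levenshtein_nil_cons (y : β) (ys : List β) :
    levenshtein C [] (y :: ys) = levenshtein C [] ys + C.insert y := by
  have key : ∀ d : {r : List δ // 0 < r.length}, d.1 = [levenshtein C [] ys] →
      (Levenshtein.impl C [] y d).1 = [levenshtein C [] ys + C.insert y] := by
    rintro ⟨r, w⟩ h
    simp only at h
    subst h
    rfl
  have E : (suffixLevenshtein C [] (y :: ys)).1 = [levenshtein C [] ys + C.insert y] :=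
    key _ (suffixLevenshtein_nil'' ys)
  show (suffixLevenshtein C [] (y :: ys)).1[0]'(suffixLevenshtein C [] (y :: ys)).2 = _
  exact (List.getElem_of_eq E _).trans rfl

theorem levenshtein_cons_nil (x : α) (xs : List α) :
    levenshtein C (x :: xs) [] = C.delete x + levenshtein C xs [] :=
  rfl

theorem impl_cons_val (x : α) (xs : List α) (y : β) (d : {r : List δ // 0 < r.length})
    (d0 : δ) (ds : List δ) (w' : 0 < ds.length) (hd : d.1 = d0 :: ds) :
    (Levenshtein.impl C (x :: xs) y d).1 =
      min (C.delete x + (Levenshtein.impl C xs y ⟨ds, w'⟩).1[0]'(Levenshtein.impl C xs y ⟨ds, w'⟩).2)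
        (min (C.insert y + d0) (C.substitute x y + ds[0])) ::
        (Levenshtein.impl C xs y ⟨ds, w'⟩).1 := by
  obtain ⟨r, w⟩ := d
  simp only at hd
  subst hd
  match ds, w' with | _ :: _, _ => rfl

theorem suffixLevenshtein_cons₁' (x : α) (xs : List α) (ys : List β) :
    (suffixLevenshtein C (x :: xs) ys).1 =
      levenshtein C (x :: xs) ys :: (suffixLevenshtein C xs ys).1 := by
  induction ys with
  | nil => rfl
  | cons y ys ih =>
    have E : (suffixLevenshtein C (x :: xs) (y :: ys)).1 = _ :=
      impl_cons_val x xs y (suffixLevenshtein C (x :: xs) ys) _ _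
        (by simp [suffixLevenshtein_length']) ih
    have L : levenshtein C (x :: xs) (y :: ys) = _ :=
      (List.getElem_of_eq E (by rw [E]; simp)).trans (List.getElem_cons_zero ..)
    exact E.trans (congrArg₂ List.cons L.symm rfl)

theorem levenshtein_cons_cons (x : α) (xs : List α) (y : β) (ys : List β) :
    levenshtein C (x :: xs) (y :: ys) =
      min (C.delete x + levenshtein C xs (y :: ys))
        (min (C.insert y + levenshtein C (x :: xs) ys)
          (C.substitute x y + levenshtein C xs ys)) := by
  have E : (suffixLevenshtein C (x :: xs) (y :: ys)).1 = _ :=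
    impl_cons_val x xs y (suffixLevenshtein C (x :: xs) ys) _ _
      (by simp [suffixLevenshtein_length']) (suffixLevenshtein_cons₁' x xs ys)
  exact ((List.getElem_of_eq E (by rw [E]; simp)).trans (List.getElem_cons_zero ..)).trans rfl

end LevAux

open Levenshtein

section Aux
variable {α : Type*} [DecidableEq α]

theorem editDist_nil_nil : editDist ([] : List α) [] = 0 := levenshtein_nil_nil

theorem editDist_nil_right (u : List α) : editDist u [] = u.length := by
  induction u with
  | nil => exact levenshtein_nil_nil
  | cons x u ih =>
    show levenshtein _ (x :: u) [] = _
    rw [levenshtein_cons_nil]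
    simp only [editDist] at ih
    rw [ih]; simp [defaultCost]; omega

theorem editDist_nil_left (v : List α) : editDist [] v = v.length := by
  induction v with
  | nil => exact levenshtein_nil_nil
  | cons y v ih =>
    show levenshtein _ [] (y :: v) = _
    rw [levenshtein_nil_cons]
    simp only [editDist] at ih
    rw [ih]; simp [defaultCost]

theorem editDist_cons_cons (x : α) (u : List α) (y : α) (v : List α) :
    editDist (x :: u) (y :: v) =
      min (1 + editDist u (y :: v))
        (min (1 + editDist (x :: u) v)
          ((if x = y then 0 else 1) + editDist u v)) := by
  simp [editDist, levenshtein_cons_cons, defaultCost]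

theorem editDist_le_delete (x : α) (u v : List α) :
    editDist (x :: u) v ≤ 1 + editDist u v := by
  cases v with
  | nil => rw [editDist_nil_right, editDist_nil_right]; simp
  | cons y v => rw [editDist_cons_cons]; exact min_le_left _ _

theorem editDist_le_insert (u : List α) (y : α) (v : List α) :
    editDist u (y :: v) ≤ 1 + editDist u v := by
  cases u with
  | nil => rw [editDist_nil_left, editDist_nil_left]; simp
  | cons x u =>
    rw [editDist_cons_cons]
    exact le_trans (min_le_right _ _) (min_le_left _ _)

theorem editDist_le_substitute (x : α) (u : List α) (y : α) (v : List α) :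
    editDist (x :: u) (y :: v) ≤ (if x = y then 0 else 1) + editDist u v := by
  rw [editDist_cons_cons]
  exact le_trans (min_le_right _ _) (min_le_right _ _)

theorem editDist_self (s : List α) : editDist s s = 0 := by
  induction s with
  | nil => exact editDist_nil_nil
  | cons a s ih => rw [editDist_cons_cons, ih]; simp

theorem editDist_append_append (u v s : List α) :
    editDist (u ++ s) (v ++ s) ≤ editDist u v := by
  induction u generalizing v with
  | nil =>
    induction v with
    | nil => simp [editDist_self]
    | cons b v ihv =>
      calc editDist ([] ++ s) ((b :: v) ++ s)
          ≤ 1 + editDist ([] ++ s) (v ++ s) := editDist_le_insert _ _ _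
        _ ≤ 1 + editDist [] v := Nat.add_le_add_left ihv 1
        _ = editDist [] (b :: v) := by
            rw [editDist_nil_left, editDist_nil_left]; simp; omega
  | cons x u ihu =>
    induction v with
    | nil =>
      calc editDist ((x :: u) ++ s) ([] ++ s)
          ≤ 1 + editDist (u ++ s) ([] ++ s) := editDist_le_delete _ _ _
        _ ≤ 1 + editDist u [] := Nat.add_le_add_left (ihu []) 1
        _ = editDist (x :: u) [] := by
            rw [editDist_nil_right, editDist_nil_right]; simp; omega
    | cons b v ihv =>
      rw [editDist_cons_cons x u b v]
      refine le_min ?_ (le_min ?_ ?_)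
      · exact le_trans (editDist_le_delete _ _ _) (Nat.add_le_add_left (ihu (b :: v)) 1)
      · exact le_trans (editDist_le_insert _ _ _) (Nat.add_le_add_left ihv 1)
      · exact le_trans (editDist_le_substitute _ _ _ _) (Nat.add_le_add_left (ihu v) _)

theorem rowMin_le (p y : List α) {j : ℕ} (hj : j ≤ y.length) :
    rowMin p y ≤ editDist p (y.take j) :=
  Finset.inf'_le _ (by simp [Finset.mem_range]; omega)

theorem rowMin_exists (p y : List α) :
    ∃ j ≤ y.length, rowMin p y = editDist p (y.take j) := by
  obtain ⟨j, hj, h⟩ := Finset.exists_mem_eq_inf' (s := Finset.range (y.length + 1))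
    (by simp) (fun j => editDist p (y.take j))
  exact ⟨j, by simpa using Nat.lt_succ_iff.mp (Finset.mem_range.mp hj), h⟩

theorem rowMin_cons_right (p : List α) (b : α) (v : List α) :
    rowMin p (b :: v) ≤ 1 + rowMin p v := by
  obtain ⟨j, hj, h⟩ := rowMin_exists p v
  calc rowMin p (b :: v) ≤ editDist p ((b :: v).take (j + 1)) :=
        rowMin_le _ _ (by simp; omega)
    _ = editDist p (b :: v.take j) := by simp
    _ ≤ 1 + editDist p (v.take j) := editDist_le_insert _ _ _
    _ = 1 + rowMin p v := by rw [h]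

theorem rowMin_cons_left (x : α) (p v : List α) :
    rowMin (x :: p) v ≤ 1 + rowMin p v := by
  obtain ⟨j, hj, h⟩ := rowMin_exists p v
  calc rowMin (x :: p) v ≤ editDist (x :: p) (v.take j) := rowMin_le _ _ hj
    _ ≤ 1 + editDist p (v.take j) := editDist_le_delete _ _ _
    _ = 1 + rowMin p v := by rw [h]

theorem rowMin_cons_cons (x : α) (p : List α) (b : α) (v : List α) :
    rowMin (x :: p) (b :: v) ≤ (if x = b then 0 else 1) + rowMin p v := by
  obtain ⟨j, hj, h⟩ := rowMin_exists p v
  calc rowMin (x :: p) (b :: v) ≤ editDist (x :: p) ((b :: v).take (j + 1)) :=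
        rowMin_le _ _ (by simp; omega)
    _ = editDist (x :: p) (b :: v.take j) := by simp
    _ ≤ (if x = b then 0 else 1) + editDist p (v.take j) := editDist_le_substitute _ _ _ _
    _ = _ := by rw [h]

theorem rowMin_le_editDist_append (p s v : List α) :
    rowMin p v ≤ editDist (p ++ s) v := by
  induction p generalizing v with
  | nil =>
    calc rowMin [] v ≤ editDist [] (v.take 0) := rowMin_le _ _ (by omega)
      _ = 0 := by simp [editDist_nil_nil]
      _ ≤ _ := Nat.zero_le _
  | cons x p' ihp =>
    induction v with
    | nil =>
      calc rowMin (x :: p') [] = editDist (x :: p') [] := by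
            simp [rowMin]
        _ ≤ editDist ((x :: p') ++ s) [] := by
            rw [editDist_nil_right, editDist_nil_right]; simp
    | cons b v' ihv =>
      have : (x :: p') ++ s = x :: (p' ++ s) := rfl
      rw [this, editDist_cons_cons]
      refine le_min ?_ (le_min ?_ ?_)
      · exact le_trans (rowMin_cons_left x p' (b :: v'))
          (Nat.add_le_add_left (ihp (b :: v')) 1)
      · exact le_trans (rowMin_cons_right (x :: p') b v') (Nat.add_le_add_left ihv 1)
      · exact le_trans (rowMin_cons_cons x p' b v') (Nat.add_le_add_left (ihp v') _)

end Aux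

theorem sInf_completions_eq_rowMin {α : Type*} [DecidableEq α]
    (p ystar : List α) :
    sInf {d | ∃ s : List α, d = editDist (p ++ s) ystar} = rowMin p ystar := by
  apply le_antisymm
  · obtain ⟨j, hj, h⟩ := rowMin_exists p ystar
    have hle : editDist (p ++ ystar.drop j) ystar ≤ rowMin p ystar := by
      rw [h]
      calc editDist (p ++ ystar.drop j) ystar
          = editDist (p ++ ystar.drop j) (ystar.take j ++ ystar.drop j) := by
            rw [List.take_append_drop]
        _ ≤ editDist p (ystar.take j) := editDist_append_append _ _ _
    have hge : rowMin p ystar ≤ editDist (p ++ ystar.drop j) ystar :=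
      rowMin_le_editDist_append _ _ _
    have : editDist (p ++ ystar.drop j) ystar = rowMin p ystar := le_antisymm hle hge
    exact Nat.sInf_le ⟨ystar.drop j, this.symm⟩
  · refine le_csInf ⟨editDist (p ++ []) ystar, ⟨[], rfl⟩⟩ ?_
    rintro d ⟨s, rfl⟩
    exact rowMin_le_editDist_append p s ystar
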